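/- Optimality criterion via level-crossing: define the stopping times τ̲ := min{ v ∈ {0,...,N-1} : L_v ≥ 0 } ∧ N and τ̄ := min{ v ∈ {0,...,N-1} : L_v > 0 } ∧ N. If a stopping time τ* ∈ T_{0,N} satisfies τ̲ ≤ τ* ≤ τ̄ a.s. and, a.s. on the event {τ* ≤ N-1}, max_{0≤v≤τ*} L_v = L_{τ*}, then τ* is optimal: for every stopping time τ ∈ T_{0,N}, E_0[X_τ] ≤ E_0[X_{τ*}] a.s. -/

import Mathlib

open MeasureTheory Filter

/-- Running maximum `max_{t ≤ v ≤ u} L v ω` (intended for `t ≤ u`). -/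
noncomputable def runMax {Ω : Type*} (L : ℕ → Ω → ℝ) (t u : ℕ) (ω : Ω) : ℝ :=
  (Finset.Icc t u).fold max (L t ω) fun v => L v ω

/-- Running minimum `min_{t ≤ v ≤ u} K v ω` (intended for `t ≤ u`). -/
noncomputable def runMin {Ω : Type*} (K : ℕ → Ω → ℝ) (t u : ℕ) (ω : Ω) : ℝ :=
  (Finset.Icc t u).fold min (K t ω) fun v => K v ω

/-- A discrete-time nonlinear expectation on the horizon `{0, ..., N}`:
a family of maps `E t` sending square-integrable `F N`-measurable random
variables to square-integrable `F t`-measurable random variables, satisfying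
monotonicity, strict monotonicity, translation invariance, the tower property,
the zero-one law and monotone convergence. -/
structure NLExp {Ω : Type*} {m0 : MeasurableSpace Ω} (μ : Measure Ω)
    (F : Filtration ℕ m0) (N : ℕ) where
  E : ℕ → (Ω → ℝ) → Ω → ℝ
  adapted : ∀ t, t ≤ N → ∀ ξ : Ω → ℝ, StronglyMeasurable[F N] ξ → MemLp ξ 2 μ →
    StronglyMeasurable[F t] (E t ξ)
  sqInt : ∀ t, t ≤ N → ∀ ξ : Ω → ℝ, StronglyMeasurable[F N] ξ → MemLp ξ 2 μ →
    MemLp (E t ξ) 2 μ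
  mono : ∀ t, t ≤ N → ∀ ξ η : Ω → ℝ, StronglyMeasurable[F N] ξ → MemLp ξ 2 μ →
    StronglyMeasurable[F N] η → MemLp η 2 μ → ξ ≤ᵐ[μ] η → E t ξ ≤ᵐ[μ] E t η
  strictMono : ∀ t, t ≤ N → ∀ ξ η : Ω → ℝ, StronglyMeasurable[F N] ξ → MemLp ξ 2 μ →
    StronglyMeasurable[F N] η → MemLp η 2 μ → ξ ≤ᵐ[μ] η →
    0 < μ {ω | ξ ω < η ω} → 0 < μ {ω | E t ξ ω < E t η ω}
  translation : ∀ t, t ≤ N → ∀ ξ ζ : Ω → ℝ, StronglyMeasurable[F N] ξ → MemLp ξ 2 μ →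
    StronglyMeasurable[F t] ζ → MemLp ζ 2 μ → E t (ξ + ζ) =ᵐ[μ] E t ξ + ζ
  tower : ∀ s t, s ≤ t → t ≤ N → ∀ ξ : Ω → ℝ, StronglyMeasurable[F N] ξ → MemLp ξ 2 μ →
    E s (E t ξ) =ᵐ[μ] E s ξ
  zeroOne : ∀ t, t ≤ N → ∀ ξ η : Ω → ℝ, StronglyMeasurable[F N] ξ → MemLp ξ 2 μ →
    StronglyMeasurable[F N] η → MemLp η 2 μ → ∀ A : Set Ω, MeasurableSet[F t] A →
    E t (A.indicator ξ + Aᶜ.indicator η) =ᵐ[μ]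
      A.indicator (E t ξ) + Aᶜ.indicator (E t η)
  monoConv : ∀ t, t ≤ N → ∀ (ξs : ℕ → Ω → ℝ) (ξ : Ω → ℝ),
    (∀ n, StronglyMeasurable[F N] (ξs n)) → (∀ n, MemLp (ξs n) 2 μ) →
    StronglyMeasurable[F N] ξ → MemLp ξ 2 μ →
    (∀ᵐ ω ∂μ, (Monotone fun n => ξs n ω) ∨ (Antitone fun n => ξs n ω)) →
    (∀ᵐ ω ∂μ, Tendsto (fun n => ξs n ω) atTop (nhds (ξ ω))) →
    ∀ᵐ ω ∂μ, Tendsto (fun n => E t (ξs n) ω) atTop (nhds (E t ξ ω))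


section RunMaxHelpers
variable {Ω : Type*}

lemma runMax_self (L : ℕ → Ω → ℝ) (t : ℕ) (ω : Ω) : runMax L t t ω = L t ω := by
  simp [runMax]

lemma runMax_succ (L : ℕ → Ω → ℝ) {t u : ℕ} (h : t ≤ u) (ω : Ω) :
    runMax L t (u + 1) ω = max (L (u + 1) ω) (runMax L t u ω) := by
  have hins : Finset.Icc t (u + 1) = insert (u + 1) (Finset.Icc t u) := by
    ext v; simp only [Finset.mem_Icc, Finset.mem_insert]; omega
  rw [runMax, hins, Finset.fold_insert (by simp)]
  rfl

lemma runMax_le (L : ℕ → Ω → ℝ) {t u : ℕ} (h : t ≤ u) {ω : Ω} {c : ℝ}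
    (hc : ∀ v, t ≤ v → v ≤ u → L v ω ≤ c) : runMax L t u ω ≤ c := by
  induction u with
  | zero =>
      have : t = 0 := Nat.le_zero.mp h
      subst this; rw [runMax_self]; exact hc 0 le_rfl le_rfl
  | succ n ih =>
      rcases Nat.lt_or_ge t (n + 1) with h' | h'
      · have htn : t ≤ n := Nat.lt_succ_iff.mp h'
        rw [runMax_succ L htn]
        exact max_le (hc _ (by omega) le_rfl)
          (ih htn fun v h1 h2 => hc v h1 (by omega))
      · have : t = n + 1 := le_antisymm h h'
        subst this; rw [runMax_self]; exact hc _ le_rfl le_rfl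

lemma le_runMax (L : ℕ → Ω → ℝ) {t v u : ℕ} (h1 : t ≤ v) (h2 : v ≤ u) (ω : Ω) :
    L v ω ≤ runMax L t u ω := by
  induction u with
  | zero =>
      have hv : v = 0 := Nat.le_zero.mp h2
      have ht : t = 0 := Nat.le_zero.mp (h1.trans h2)
      subst hv; subst ht; rw [runMax_self]
  | succ n ih =>
      rcases Nat.lt_or_ge v (n + 1) with h' | h'
      · have hvn : v ≤ n := Nat.lt_succ_iff.mp h'
        have htn : t ≤ n := h1.trans hvn
        rw [runMax_succ L htn]
        exact le_trans (ih hvn) (le_max_right _ _)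
      · have : v = n + 1 := le_antisymm h2 h'
        subst this
        rcases Nat.lt_or_ge t (n + 1) with ht' | ht'
        · rw [runMax_succ L (Nat.lt_succ_iff.mp ht')]
          exact le_max_left _ _
        · have : t = n + 1 := le_antisymm (h1.trans h2) ht'
          subst this; rw [runMax_self]

lemma stronglyMeasurable_runMax {m : MeasurableSpace Ω} (L : ℕ → Ω → ℝ) {t u : ℕ}
    (h : ∀ v, v ≤ u → StronglyMeasurable[m] (L v)) (ht : t ≤ u) :
    StronglyMeasurable[m] (fun ω => runMax L t u ω) := by
  induction u with
  | zero =>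
      have : t = 0 := Nat.le_zero.mp ht
      subst this
      simpa [runMax_self] using h 0 le_rfl
  | succ n ih =>
      rcases Nat.lt_or_ge t (n + 1) with h' | h'
      · have htn : t ≤ n := Nat.lt_succ_iff.mp h'
        have : (fun ω => runMax L t (n + 1) ω)
            = fun ω => max (L (n + 1) ω) (runMax L t n ω) := by
          funext ω; exact runMax_succ L htn ω
        rw [this]
        exact ((h (n + 1) le_rfl).measurable.max
          (ih (fun v hv => h v (by omega)) htn).measurable).stronglyMeasurable
      · have : t = n + 1 := le_antisymm ht h'
        subst this
        simpa [runMax_self] using h (n + 1) le_rfl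

/-- The purely deterministic level-crossing comparison of the accumulated running maxima. -/
lemma key_ineq (L : ℕ → Ω → ℝ) (N r s : ℕ) (ω : Ω)
    (hrN : r ≤ N) (hsN : s ≤ N)
    (hneg : ∀ v, v < s → L v ω ≤ 0)
    (hpos : s < N → 0 ≤ L s ω) :
    ∑ u ∈ Finset.Ico r N, runMax L r u ω ≤ ∑ u ∈ Finset.Ico s N, runMax L s u ω := by
  rcases le_or_gt s r with hsr | hrs
  · -- s ≤ r
    rw [← Finset.sum_Ico_consecutive (fun u => runMax L s u ω) hsr hrN]
    have h1 : ∑ u ∈ Finset.Ico r N, runMax L r u ω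
        ≤ ∑ u ∈ Finset.Ico r N, runMax L s u ω := by
      refine Finset.sum_le_sum fun u hu => ?_
      obtain ⟨hru, _⟩ := Finset.mem_Ico.mp hu
      refine runMax_le L hru fun v h1 h2 => le_runMax L (hsr.trans h1) h2 ω
    have h2 : (0 : ℝ) ≤ ∑ u ∈ Finset.Ico s r, runMax L s u ω := by
      refine Finset.sum_nonneg fun u hu => ?_
      obtain ⟨hsu, hur⟩ := Finset.mem_Ico.mp hu
      have hsN' : s < N := lt_of_le_of_lt hsu (lt_of_lt_of_le hur hrN)
      exact le_trans (hpos hsN') (le_runMax L le_rfl hsu ω)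
    linarith
  · -- r < s
    have hrs' : r ≤ s := hrs.le
    rw [← Finset.sum_Ico_consecutive (fun u => runMax L r u ω) hrs' hsN]
    have h1 : ∑ u ∈ Finset.Ico r s, runMax L r u ω ≤ 0 := by
      refine Finset.sum_nonpos fun u hu => ?_
      obtain ⟨hru, hus⟩ := Finset.mem_Ico.mp hu
      exact runMax_le L hru fun v h1 h2 => hneg v (lt_of_le_of_lt h2 hus)
    have h2 : ∑ u ∈ Finset.Ico s N, runMax L r u ω
        ≤ ∑ u ∈ Finset.Ico s N, runMax L s u ω := by
      refine Finset.sum_le_sum fun u hu => ?_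
      obtain ⟨hsu, huN⟩ := Finset.mem_Ico.mp hu
      have hsN' : s < N := lt_of_le_of_lt hsu huN
      refine runMax_le L (hrs'.trans hsu) fun v h1 h2 => ?_
      rcases Nat.lt_or_ge v s with hv | hv
      · exact le_trans (hneg v hv) (le_trans (hpos hsN') (le_runMax L le_rfl hsu ω))
      · exact le_runMax L hv h2 ω
    linarith

end RunMaxHelpers

section NLExpHelpers

variable {Ω : Type*} {m0 : MeasurableSpace Ω} {μ : Measure Ω} [IsProbabilityMeasure μ]
  {F : Filtration ℕ m0} {N : ℕ}

lemma NLExp.E_zero (EE : NLExp μ F N) {t : ℕ} (ht : t ≤ N) :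
    EE.E t (0 : Ω → ℝ) =ᵐ[μ] 0 := by
  have h0meas : StronglyMeasurable[F N] (0 : Ω → ℝ) := stronglyMeasurable_const
  have h0mem : MemLp (0 : Ω → ℝ) 2 μ := memLp_const 0
  have hEmeas : StronglyMeasurable[F t] (EE.E t (0 : Ω → ℝ)) := EE.adapted t ht 0 h0meas h0mem
  have hEmem : MemLp (EE.E t (0 : Ω → ℝ)) 2 μ := EE.sqInt t ht 0 h0meas h0mem
  have htr := EE.translation t ht 0 (EE.E t (0 : Ω → ℝ)) h0meas h0mem hEmeas hEmem
  rw [zero_add] at htr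
  have htow := EE.tower t t le_rfl ht 0 h0meas h0mem
  filter_upwards [htr, htow] with ω h1 h2
  have h3 := h2.symm.trans h1
  rw [Pi.add_apply] at h3
  simp only [Pi.zero_apply]
  linarith

lemma NLExp.E_fix (EE : NLExp μ F N) {t : ℕ} (ht : t ≤ N) (ζ : Ω → ℝ)
    (hζ : StronglyMeasurable[F t] ζ) (hζm : MemLp ζ 2 μ) :
    EE.E t ζ =ᵐ[μ] ζ := by
  have h0meas : StronglyMeasurable[F N] (0 : Ω → ℝ) := stronglyMeasurable_const
  have h0mem : MemLp (0 : Ω → ℝ) 2 μ := memLp_const 0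
  have htr := EE.translation t ht 0 ζ h0meas h0mem hζ hζm
  rw [zero_add] at htr
  filter_upwards [htr, EE.E_zero ht] with ω h1 h2
  rw [h1, Pi.add_apply, h2, Pi.zero_apply, zero_add]

lemma NLExp.E_congr (EE : NLExp μ F N) {t : ℕ} (ht : t ≤ N) {f g : Ω → ℝ}
    (hf : StronglyMeasurable[F N] f) (hfm : MemLp f 2 μ)
    (hg : StronglyMeasurable[F N] g) (hgm : MemLp g 2 μ) (h : f =ᵐ[μ] g) :
    EE.E t f =ᵐ[μ] EE.E t g :=
  (EE.mono t ht f g hf hfm hg hgm h.le).antisymm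
    (EE.mono t ht g f hg hgm hf hfm h.symm.le)

/-- Value of a stopping-time-evaluated adapted family, key identity via backward induction. -/
lemma NLExp.E_stopped (EE : NLExp μ F N) (X ξ : ℕ → Ω → ℝ)
    (hXad : ∀ t, t ≤ N → StronglyMeasurable[F t] (X t))
    (hXmem : ∀ t, t ≤ N → MemLp (X t) 2 μ)
    (hξmeas : ∀ t, t ≤ N → StronglyMeasurable[F N] (ξ t))
    (hξmem : ∀ t, t ≤ N → MemLp (ξ t) 2 μ)
    (hrep : ∀ t, t < N → X t =ᵐ[μ] EE.E t (ξ t))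
    (hNeq : ξ N = X N)
    (σ : Ω → ℕ) (hσ : IsStoppingTime F (fun ω => (σ ω : WithTop ℕ))) (hσN : ∀ ω, σ ω ≤ N) :
    StronglyMeasurable[F N] (fun ω => ξ (σ ω) ω) ∧ MemLp (fun ω => ξ (σ ω) ω) 2 μ ∧
    EE.E 0 (fun ω => X (σ ω) ω) =ᵐ[μ] EE.E 0 (fun ω => ξ (σ ω) ω) := by
  classical
  set H : ℕ → Ω → ℝ := fun k ω => ∑ t ∈ Finset.range (N + 1),
    Set.indicator {ω' | σ ω' = t} (if t < k then ξ t else X t) ω with hHdef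
  have Hpt : ∀ k ω, H k ω = if σ ω < k then ξ (σ ω) ω else X (σ ω) ω := by
    intro k ω
    simp only [hHdef]
    rw [Finset.sum_eq_single (σ ω)]
    · simp only [Set.indicator_apply, Set.mem_setOf_eq, if_pos rfl]
      split_ifs <;> rfl
    · intro t _ hne
      simp [Set.indicator_apply, fun h : σ ω = t => hne h.symm]
      intro h; exact absurd h.symm hne
    · intro hmem
      exact absurd (Finset.mem_range.mpr (Nat.lt_succ_of_le (hσN ω))) hmem
  have hAmeas : ∀ t, t ≤ N → MeasurableSet[F N] {ω' | σ ω' = t} := fun t htN =>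
    F.mono htN _ (by simpa using hσ.measurableSet_eq_of_countable t)
  have Hmeas : ∀ k, StronglyMeasurable[F N] (H k) := by
    intro k
    simp only [hHdef]
    refine Finset.stronglyMeasurable_fun_sum _ fun t htm => ?_
    have htN : t ≤ N := Nat.lt_succ_iff.mp (Finset.mem_range.mp htm)
    refine StronglyMeasurable.indicator ?_ (hAmeas t htN)
    by_cases hlt : t < k
    · simpa [hlt] using hξmeas t htN
    · simpa [hlt] using (hXad t htN).mono (F.mono htN)
  have Hmem : ∀ k, MemLp (H k) 2 μ := by
    intro k
    simp only [hHdef]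
    refine memLp_finset_sum _ fun t htm => ?_
    have htN : t ≤ N := Nat.lt_succ_iff.mp (Finset.mem_range.mp htm)
    refine MemLp.indicator (F.le N _ (hAmeas t htN)) ?_
    by_cases hlt : t < k
    · simpa [hlt] using hξmem t htN
    · simpa [hlt] using hXmem t htN
  have hH0 : H 0 = fun ω => X (σ ω) ω := by
    funext ω; rw [Hpt]; simp
  have hHN : H N = fun ω => ξ (σ ω) ω := by
    funext ω; rw [Hpt]
    rcases lt_or_ge (σ ω) N with h | h
    · simp [h]
    · have : σ ω = N := le_antisymm (hσN ω) h
      rw [this]; simp [hNeq]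
  have step : ∀ k, k < N → EE.E 0 (H k) =ᵐ[μ] EE.E 0 (H (k + 1)) := by
    intro k hk
    have hkN : k ≤ N := hk.le
    set A : Set Ω := {ω' | σ ω' = k} with hAdef
    have hA : MeasurableSet[F k] A := by
        rw [hAdef]; simpa using hσ.measurableSet_eq_of_countable k
    have eq1 : H k = A.indicator (X k) + Aᶜ.indicator (H k) := by
      funext ω
      by_cases hω : ω ∈ A
      · have hσω : σ ω = k := hω
        simp only [Pi.add_apply, Set.indicator_of_mem hω,
          Set.indicator_of_notMem (by simpa using hω : ω ∉ Aᶜ)]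
        rw [Hpt, hσω, if_neg (lt_irrefl k), add_zero]
      · simp only [Pi.add_apply, Set.indicator_of_notMem hω,
          Set.indicator_of_mem (by simpa using hω : ω ∈ Aᶜ), zero_add]
    have eq2 : H (k + 1) = A.indicator (ξ k) + Aᶜ.indicator (H k) := by
      funext ω
      by_cases hω : ω ∈ A
      · have hσω : σ ω = k := hω
        simp only [Pi.add_apply, Set.indicator_of_mem hω,
          Set.indicator_of_notMem (by simpa using hω : ω ∉ Aᶜ)]
        rw [Hpt, hσω, if_pos (Nat.lt_succ_self k), add_zero]
      · have hσω : σ ω ≠ k := hω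
        simp only [Pi.add_apply, Set.indicator_of_notMem hω,
          Set.indicator_of_mem (by simpa using hω : ω ∈ Aᶜ), zero_add]
        rw [Hpt, Hpt]
        rcases Nat.lt_or_ge (σ ω) k with h | h
        · rw [if_pos h, if_pos (h.trans (Nat.lt_succ_self k))]
        · have h' : k < σ ω := lt_of_le_of_ne h (Ne.symm hσω)
          rw [if_neg (not_lt.mpr h), if_neg (not_lt.mpr h')]
    have hXkmeasN : StronglyMeasurable[F N] (X k) := (hXad k hkN).mono (F.mono hkN)
    have e1 : EE.E k (H k) =ᵐ[μ]
        A.indicator (EE.E k (X k)) + Aᶜ.indicator (EE.E k (H k)) := by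
      have := EE.zeroOne k hkN (X k) (H k) hXkmeasN (hXmem k hkN) (Hmeas k) (Hmem k) A hA
      rwa [← eq1] at this
    have e2 : EE.E k (H (k + 1)) =ᵐ[μ]
        A.indicator (EE.E k (ξ k)) + Aᶜ.indicator (EE.E k (H k)) := by
      have := EE.zeroOne k hkN (ξ k) (H k) (hξmeas k hkN) (hξmem k hkN) (Hmeas k) (Hmem k) A hA
      rwa [← eq2] at this
    have hfix : EE.E k (X k) =ᵐ[μ] X k := EE.E_fix hkN (X k) (hXad k hkN) (hXmem k hkN)
    have hrepk : X k =ᵐ[μ] EE.E k (ξ k) := hrep k hk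
    have emid : EE.E k (H k) =ᵐ[μ] EE.E k (H (k + 1)) := by
      filter_upwards [e1, e2, hfix, hrepk] with ω h1 h2 h3 h4
      rw [h1, h2]
      by_cases hω : ω ∈ A
      · simp only [Pi.add_apply, Set.indicator_of_mem hω,
          Set.indicator_of_notMem (by simpa using hω : ω ∉ Aᶜ)]
        rw [h3, h4]
      · simp only [Pi.add_apply, Set.indicator_of_notMem hω,
          Set.indicator_of_mem (by simpa using hω : ω ∈ Aᶜ)]
    have t1 := EE.tower 0 k (Nat.zero_le k) hkN (H k) (Hmeas k) (Hmem k)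
    have t2 := EE.tower 0 k (Nat.zero_le k) hkN (H (k + 1)) (Hmeas (k + 1)) (Hmem (k + 1))
    have hc : EE.E 0 (EE.E k (H k)) =ᵐ[μ] EE.E 0 (EE.E k (H (k + 1))) := by
      refine EE.E_congr (Nat.zero_le N)
        ((EE.adapted k hkN (H k) (Hmeas k) (Hmem k)).mono (F.mono hkN))
        (EE.sqInt k hkN (H k) (Hmeas k) (Hmem k))
        ((EE.adapted k hkN (H (k + 1)) (Hmeas (k + 1)) (Hmem (k + 1))).mono (F.mono hkN))
        (EE.sqInt k hkN (H (k + 1)) (Hmeas (k + 1)) (Hmem (k + 1))) emid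
    exact t1.symm.trans (hc.trans t2)
  have chain : ∀ k, k ≤ N → EE.E 0 (H 0) =ᵐ[μ] EE.E 0 (H k) := by
    intro k
    induction k with
    | zero => intro _; exact Filter.EventuallyEq.rfl
    | succ n ih =>
        intro hn
        exact (ih (Nat.le_of_succ_le hn)).trans (step n (Nat.lt_of_succ_le hn))
  refine ⟨hHN ▸ Hmeas N, hHN ▸ Hmem N, ?_⟩
  have := chain N le_rfl
  rwa [hH0, hHN] at this

end NLExpHelpers

/-- **Optimality criterion via level-crossing.** With
`τ̲ := min{ v < N : L_v ≥ 0 } ∧ N` and `τ̄ := min{ v < N : L_v > 0 } ∧ N`, any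
stopping time `τ*` with `τ̲ ≤ τ* ≤ τ̄` a.s. and `max_{0≤v≤τ*} L_v = L_{τ*}` a.s. on
`{τ* ≤ N-1}` is optimal: `E 0 [X_τ] ≤ E 0 [X_{τ*}]` a.s. for every stopping time
`τ ∈ T_{0,N}`. -/
theorem level_crossing_optimality_criterion
{Ω : Type*} [TopologicalSpace Ω] [PolishSpace Ω]
    [m0 : MeasurableSpace Ω] [BorelSpace Ω]
    (μ : Measure Ω) [IsProbabilityMeasure μ]
    (F : Filtration ℕ m0) (N : ℕ) (hN : 1 ≤ N)
    (EE : NLExp μ F N)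
(X : ℕ → Ω → ℝ)
    (hX_adapted : ∀ t, t ≤ N → StronglyMeasurable[F t] (X t))
    (hX_sqInt : ∀ t, t ≤ N → MemLp (X t) 2 μ)
(L : ℕ → Ω → ℝ)
    (hL_adapted : ∀ t, t < N → StronglyMeasurable[F t] (L t))
    (hL_sqInt : ∀ t, t < N →
      MemLp (fun ω => ∑ u ∈ Finset.Ico t N, runMax L t u ω) 2 μ)
    (hL_rep : ∀ t, t < N →
      X t =ᵐ[μ] EE.E t fun ω => (∑ u ∈ Finset.Ico t N, runMax L t u ω) + X N ω)
    (τlow τbar : Ω → ℕ)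
    (hτlow_def : ∀ ω, τlow ω = sInf ({v | v < N ∧ 0 ≤ L v ω} ∪ {N}))
    (hτbar_def : ∀ ω, τbar ω = sInf ({v | v < N ∧ 0 < L v ω} ∪ {N}))
    (τstar : Ω → ℕ) (hτstar : IsStoppingTime F (fun ω => (τstar ω : WithTop ℕ))) (hτstar_le : ∀ ω, τstar ω ≤ N)
    (hbetween : ∀ᵐ ω ∂μ, τlow ω ≤ τstar ω ∧ τstar ω ≤ τbar ω)
    (hmax : ∀ᵐ ω ∂μ, τstar ω < N → runMax L 0 (τstar ω) ω = L (τstar ω) ω) :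
    ∀ τ : Ω → ℕ, IsStoppingTime F (fun ω => (τ ω : WithTop ℕ)) → (∀ ω, τ ω ≤ N) →
      EE.E 0 (fun ω => X (τ ω) ω) ≤ᵐ[μ] EE.E 0 fun ω => X (τstar ω) ω := by
  classical
  intro τ hτ hτle
  set ξ : ℕ → Ω → ℝ :=
    fun t ω => (∑ u ∈ Finset.Ico t N, runMax L t u ω) + X N ω with hξdef
  have hξmeas : ∀ t, t ≤ N → StronglyMeasurable[F N] (ξ t) := by
    intro t htN
    have hsum : StronglyMeasurable[F N] (fun ω => ∑ u ∈ Finset.Ico t N, runMax L t u ω) := by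
      refine Finset.stronglyMeasurable_fun_sum _ fun u hu => ?_
      obtain ⟨htu, huN⟩ := Finset.mem_Ico.mp hu
      exact stronglyMeasurable_runMax L
        (fun v hv => (hL_adapted v (lt_of_le_of_lt hv huN)).mono
          (F.mono (le_of_lt (lt_of_le_of_lt hv huN)))) htu
    exact hsum.add ((hX_adapted N le_rfl).mono le_rfl)
  have hξNX : ξ N = X N := by
    funext ω; simp [hξdef]
  have hξmem : ∀ t, t ≤ N → MemLp (ξ t) 2 μ := by
    intro t htN
    rcases lt_or_ge t N with h | h
    · exact (hL_sqInt t h).add (hX_sqInt N le_rfl)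
    · have ht : t = N := le_antisymm htN h
      rw [ht, hξNX]; exact hX_sqInt N le_rfl
  have hrep : ∀ t, t < N → X t =ᵐ[μ] EE.E t (ξ t) := fun t ht => hL_rep t ht
  obtain ⟨hmτ, hmemτ, hkeyτ⟩ := EE.E_stopped X ξ hX_adapted hX_sqInt hξmeas hξmem hrep hξNX
    τ hτ hτle
  obtain ⟨hmτs, hmemτs, hkeyτs⟩ := EE.E_stopped X ξ hX_adapted hX_sqInt hξmeas hξmem hrep hξNX
    τstar hτstar hτstar_le
  have hle : (fun ω => ξ (τ ω) ω) ≤ᵐ[μ] (fun ω => ξ (τstar ω) ω) := by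
    filter_upwards [hbetween, hmax] with ω hb hm
    have hneg : ∀ v, v < τstar ω → L v ω ≤ 0 := by
      intro v hv
      by_contra hc
      have hvN : v < N := lt_of_lt_of_le hv (hτstar_le ω)
      have : τbar ω ≤ v := by
        rw [hτbar_def ω]
        exact Nat.sInf_le (Or.inl ⟨hvN, lt_of_not_ge hc⟩)
      omega
    have hpos : τstar ω < N → 0 ≤ L (τstar ω) ω := by
      intro hsN
      have hlowN : τlow ω < N := lt_of_le_of_lt hb.1 hsN
      have hmem : τlow ω ∈ ({v | v < N ∧ 0 ≤ L v ω} ∪ {N} : Set ℕ) := by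
        rw [hτlow_def ω]
        exact Nat.sInf_mem ⟨N, Or.inr rfl⟩
      have hlowpos : 0 ≤ L (τlow ω) ω := by
        rcases hmem with h | h
        · exact h.2
        · rw [Set.mem_singleton_iff] at h; omega
      have h1 : L (τlow ω) ω ≤ runMax L 0 (τstar ω) ω :=
        le_runMax L (Nat.zero_le _) hb.1 ω
      rw [hm hsN] at h1
      exact le_trans hlowpos h1
    have := key_ineq L N (τ ω) (τstar ω) ω (hτle ω) (hτstar_le ω) hneg hpos
    simpa [hξdef] using add_le_add_right this (X N ω)
  have hmono := EE.mono 0 (Nat.zero_le N) _ _ hmτ hmemτ hmτs hmemτs hle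
  exact hkeyτ.le.trans (hmono.trans hkeyτs.symm.le)
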